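/- Let d ≥ 1 and let v_1, ..., v_{d(d+1)/2} be unit vectors in ℝ^d that are equiangular with common angle β = 1/√(d+2). Then there exist complex numbers z_1, ..., z_{d(d+1)/2} with |z_i| = 1 such that the matrices U_i := I_d − (1−z_i)·v_i v_iᵀ ∈ M_d(ℂ) are unitary and satisfy tr(U_i* U_j) = 0 for all i ≠ j, if and only if d ≤ 3. -/

import Mathlib

open Matrix

/-- The complex rank-one projection `v vᵀ` associated to a real vector `v`. -/
noncomputable def realProj {d : ℕ} (v : Fin d → ℝ) : Matrix (Fin d) (Fin d) ℂ :=
  (Matrix.vecMulVec v v).map Complex.ofReal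

open Complex

lemma vecMulVec_mul_vecMulVec' {d : ℕ} (u v x y : Fin d → ℝ) :
    vecMulVec u v * vecMulVec x y = (v ⬝ᵥ x) • vecMulVec u y := by
  ext i j
  simp only [mul_apply, vecMulVec_apply, Matrix.smul_apply, smul_eq_mul, dotProduct, Finset.sum_mul]
  exact Finset.sum_congr rfl fun k _ => by ring

lemma realProj_conjT {d : ℕ} (v : Fin d → ℝ) : (realProj v)ᴴ = realProj v := by
  ext i j
  simp [realProj, conjTranspose_apply, vecMulVec_apply, mul_comm]

lemma realProj_mul {d : ℕ} (u w : Fin d → ℝ) :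
    realProj u * realProj w = (((u ⬝ᵥ w : ℝ) : ℂ)) • ((vecMulVec u w).map Complex.ofReal) := by
  ext i j
  simp only [realProj, Matrix.map_apply, mul_apply, vecMulVec_apply, Matrix.smul_apply,
    smul_eq_mul, dotProduct]
  push_cast
  rw [Finset.sum_mul]
  exact Finset.sum_congr rfl fun k _ => by ring

lemma realProj_mul_self {d : ℕ} (v : Fin d → ℝ) (hv : v ⬝ᵥ v = 1) :
    realProj v * realProj v = realProj v := by
  rw [realProj_mul, hv]
  simp [realProj]

lemma trace_map_ofReal {d : ℕ} (A : Matrix (Fin d) (Fin d) ℝ) :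
    trace (A.map Complex.ofReal) = ((trace A : ℝ) : ℂ) := by
  simp [Matrix.trace, Matrix.map_apply, Matrix.diag]

lemma trace_vecMulVec' {d : ℕ} (u w : Fin d → ℝ) :
    trace (vecMulVec u w) = u ⬝ᵥ w := by
  simp [Matrix.trace, vecMulVec_apply, Matrix.diag, dotProduct]

lemma trace_realProj {d : ℕ} (v : Fin d → ℝ) :
    trace (realProj v) = ((v ⬝ᵥ v : ℝ) : ℂ) := by
  rw [realProj, trace_map_ofReal, trace_vecMulVec']

lemma trace_realProj_mul {d : ℕ} (u w : Fin d → ℝ) :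
    trace (realProj u * realProj w) = ((u ⬝ᵥ w : ℝ) : ℂ) ^ 2 := by
  rw [realProj_mul, trace_smul, trace_map_ofReal, trace_vecMulVec']
  simp [smul_eq_mul]
  ring

lemma trace_formula {d : ℕ} (u w : Fin d → ℝ) (hu : u ⬝ᵥ u = 1) (hw : w ⬝ᵥ w = 1) (a b : ℂ) :
    trace ((1 - a • realProj u)ᴴ * (1 - b • realProj w)) =
      (d : ℂ) - b - (starRingEnd ℂ) a
        + (starRingEnd ℂ) a * b * ((u ⬝ᵥ w : ℝ) : ℂ) ^ 2 := by
  rw [conjTranspose_sub, conjTranspose_one, conjTranspose_smul, realProj_conjT]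
  simp only [sub_mul, mul_sub, one_mul, mul_one, smul_mul_smul_comm, trace_sub, trace_smul,
    trace_one, trace_realProj, trace_realProj_mul, hu, hw, smul_eq_mul, Complex.ofReal_one,
    Fintype.card_fin, Complex.star_def]
  ring

lemma unitary_aux {d : ℕ} (v : Fin d → ℝ) (hv : v ⬝ᵥ v = 1) (z : ℂ)
    (hz : z * (starRingEnd ℂ) z = 1) :
    (1 - (1 - z) • realProj v) ∈ Matrix.unitaryGroup (Fin d) ℂ := by
  rw [Matrix.mem_unitaryGroup_iff]
  have hstar : star (1 - (1 - z) • realProj v)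
      = 1 - ((starRingEnd ℂ) (1 - z)) • realProj v := by
    show (1 - (1 - z) • realProj v)ᴴ = _
    rw [conjTranspose_sub, conjTranspose_one, conjTranspose_smul, realProj_conjT]
    rfl
  rw [hstar]
  have expand : ∀ a b : ℂ, (1 - a • realProj v) * (1 - b • realProj v)
      = 1 - (a + b - a * b) • realProj v := by
    intro a b
    rw [sub_mul, mul_sub, mul_sub, one_mul, mul_one, smul_mul_smul_comm,
      realProj_mul_self v hv, sub_smul, add_smul]
    simp only [one_mul, mul_one]
    abel
  rw [expand]
  have hco : (1 - z) + (starRingEnd ℂ) (1 - z) - (1 - z) * (starRingEnd ℂ) (1 - z) = 0 := by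
    simp only [map_sub, _root_.map_one]
    linear_combination -hz
  rw [hco, zero_smul, sub_zero]

/-- for a maximal set of d(d+1)/2 real equiangular unit vectors with common
angle 1/√(d+2), unimodular numbers z_i making U_i = I_d − (1−z_i) v_i v_iᵀ unitary and
pairwise trace-orthogonal exist if and only if d ≤ 3. -/
theorem equiangular_lines_unitaries_iff_dim_le_three
    {d : ℕ} (hd : 1 ≤ d) (v : Fin (d * (d + 1) / 2) → (Fin d → ℝ))
    (hunit : ∀ i, v i ⬝ᵥ v i = 1)
    (hang : ∀ i j, i ≠ j → |v i ⬝ᵥ v j| = 1 / Real.sqrt ((d : ℝ) + 2)) :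
    (∃ z : Fin (d * (d + 1) / 2) → ℂ, (∀ i, ‖z i‖ = 1) ∧
      (∀ i, (1 - (1 - z i) • realProj (v i)) ∈ Matrix.unitaryGroup (Fin d) ℂ) ∧
      (∀ i j, i ≠ j →
        Matrix.trace ((1 - (1 - z i) • realProj (v i))ᴴ * (1 - (1 - z j) • realProj (v j))) = 0))
    ↔ d ≤ 3 := by
  have hd2 : ((d : ℝ) + 2) ≠ 0 := by positivity
  have hcsq : ∀ i j, i ≠ j → ((v i ⬝ᵥ v j : ℝ) : ℂ) ^ 2 = ((d : ℂ) + 2)⁻¹ := by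
    intro i j hij
    have h := hang i j hij
    have h2 : (0:ℝ) ≤ (d:ℝ) + 2 := by positivity
    have hr : (v i ⬝ᵥ v j) ^ 2 = ((d:ℝ) + 2)⁻¹ := by
      rw [← _root_.sq_abs, h, div_pow, one_pow, Real.sq_sqrt h2, one_div]
    rw [show ((v i ⬝ᵥ v j : ℝ) : ℂ) ^ 2 = (((v i ⬝ᵥ v j) ^ 2 : ℝ) : ℂ) by push_cast; ring, hr]
    push_cast
    ring
  constructor
  · rintro ⟨z, habs, -, htr⟩
    by_contra hd3
    push_neg at hd3
    have hd4 : 4 ≤ d := hd3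
    have hn : 3 ≤ d * (d + 1) / 2 := by
      have : 20 ≤ d * (d + 1) := by nlinarith
      omega
    let i0 : Fin (d * (d + 1) / 2) := ⟨0, by omega⟩
    let i1 : Fin (d * (d + 1) / 2) := ⟨1, by omega⟩
    let i2 : Fin (d * (d + 1) / 2) := ⟨2, by omega⟩
    have key : ∀ i j, i ≠ j →
        (d : ℂ) - (1 - z j) - (starRingEnd ℂ) (1 - z i)
          + (starRingEnd ℂ) (1 - z i) * (1 - z j) * ((d:ℂ)+2)⁻¹ = 0 := by
      intro i j hij
      have h := htr i j hij
      rw [trace_formula (v i) (v j) (hunit i) (hunit j), hcsq i j hij] at h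
      linear_combination h
    have habs2 : ∀ i, ‖1 - z i‖ ≤ 2 := by
      intro i
      have h := norm_sub_le (1:ℂ) (z i)
      simp only [norm_one] at h
      rw [habs i] at h
      linarith
    have hdC : ((d:ℂ) + 2) ≠ 0 := by
      rw [show (d:ℂ) + 2 = ((d + 2 : ℕ) : ℂ) by push_cast; ring]
      exact Nat.cast_ne_zero.mpr (by omega)
    have hne : ((1 - z i0) * ((d:ℂ)+2)⁻¹ - 1) ≠ 0 := by
      intro h
      have h1 : (1 - z i0) * ((d:ℂ)+2)⁻¹ = 1 := sub_eq_zero.mp h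
      have h' : 1 - z i0 = (d:ℂ) + 2 := by
        field_simp at h1
        linear_combination h1
      have hb := habs2 i0
      rw [h'] at hb
      rw [show (d:ℂ)+2 = (((d:ℝ)+2 : ℝ) : ℂ) by push_cast; ring, Complex.norm_real, Real.norm_eq_abs,
        _root_.abs_of_nonneg (by positivity)] at hb
      have : (4:ℝ) ≤ d := by exact_mod_cast hd4
      linarith
    have h12 : z i1 = z i2 := by
      have e1 := key i1 i0 (by simp only [i1, i0, ne_eq, Fin.mk.injEq]; omega)
      have e2 := key i2 i0 (by simp only [i2, i0, ne_eq, Fin.mk.injEq]; omega)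
      have hz : ((starRingEnd ℂ) (1 - z i1) - (starRingEnd ℂ) (1 - z i2))
          * ((1 - z i0) * ((d:ℂ)+2)⁻¹ - 1) = 0 := by linear_combination e1 - e2
      have h := (mul_eq_zero.mp hz).resolve_right hne
      have hcc : (starRingEnd ℂ) (1 - z i1) = (starRingEnd ℂ) (1 - z i2) :=
        sub_eq_zero.mp h
      have := congrArg (starRingEnd ℂ) hcc
      simp only [Complex.conj_conj] at this
      linear_combination -this
    have e := key i1 i2 (by simp only [i1, i2, ne_eq, Fin.mk.injEq]; omega)
    rw [← h12] at e
    have hmc : (starRingEnd ℂ) (1 - z i1) * (1 - z i1)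
        = ((Complex.normSq (1 - z i1) : ℝ) : ℂ) := by rw [mul_comm, Complex.mul_conj]
    have hsum : (1 - z i1) + (starRingEnd ℂ) (1 - z i1)
        = ((2 * (1 - z i1).re : ℝ) : ℂ) := Complex.add_conj _
    have e' : (((d:ℝ) - 2 * (1 - z i1).re
        + Complex.normSq (1 - z i1) * ((d:ℝ)+2)⁻¹ : ℝ) : ℂ) = 0 := by
      push_cast at hmc hsum ⊢
      linear_combination e + hsum - ((d:ℂ)+2)⁻¹ * hmc
    have e'' : (d:ℝ) - 2 * (1 - z i1).re + Complex.normSq (1 - z i1) * ((d:ℝ)+2)⁻¹ = 0 := by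
      exact_mod_cast e'
    have hnsq1 : (z i1).re * (z i1).re + (z i1).im * (z i1).im = 1 := by
      rw [← Complex.normSq_apply, ← Complex.sq_norm, habs i1, one_pow]
    have hw : Complex.normSq (1 - z i1) = 2 * (1 - (z i1).re) := by
      rw [Complex.normSq_apply, Complex.sub_re, Complex.sub_im, Complex.one_re, Complex.one_im]
      linear_combination hnsq1
    have hre : (1 - z i1).re = 1 - (z i1).re := by
      simp [Complex.sub_re, Complex.one_re]
    have hb4 : Complex.normSq (1 - z i1) ≤ 4 := by
      rw [← Complex.sq_norm]
      nlinarith [habs2 i1, norm_nonneg (1 - z i1)]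
    rw [hre, hw] at e''
    have hd4' : (4:ℝ) ≤ d := by exact_mod_cast hd4
    have hT : 1 - (z i1).re ≤ 2 := by rw [hw] at hb4; linarith
    have hinv : ((d:ℝ)+2) * ((d:ℝ)+2)⁻¹ = 1 := mul_inv_cancel₀ hd2
    nlinarith [mul_eq_zero_of_left e'' ((d:ℝ)+2), hT, hd4', hinv]
  · intro hd3
    have hd1 : (1:ℝ) ≤ d := by exact_mod_cast hd
    have hd3' : (d:ℝ) ≤ 3 := by exact_mod_cast hd3
    set r : ℝ := d*(d+2)/(2*(d+1)) with hr_def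
    have hdp1 : (0:ℝ) < 2*((d:ℝ)+1) := by positivity
    have hr0 : 0 ≤ r := by positivity
    have hr2 : r ≤ 2 := by
      rw [hr_def, div_le_iff₀ hdp1]
      nlinarith
    set s : ℝ := r*(2-r) with hs_def
    have hs0 : 0 ≤ s := mul_nonneg hr0 (by linarith)
    have hsq : Real.sqrt s * Real.sqrt s = s := Real.mul_self_sqrt hs0
    set z : ℂ := Complex.ofReal (1-r) + Complex.ofReal (Real.sqrt s) * Complex.I with hz_def
    have hzre : z.re = 1 - r := by simp [hz_def]
    have hzim : z.im = Real.sqrt s := by simp [hz_def]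
    have hnsq : Complex.normSq z = 1 := by
      rw [Complex.normSq_apply, hzre, hzim]
      linear_combination hsq
    have habs1 : ‖z‖ = 1 := by rw [Complex.norm_def, hnsq, Real.sqrt_one]
    have hmulconj : z * (starRingEnd ℂ) z = 1 := by rw [Complex.mul_conj, hnsq]; simp
    refine ⟨fun _ => z, fun i => habs1, fun i => unitary_aux (v i) (hunit i) z hmulconj, ?_⟩
    intro i j hij
    rw [trace_formula (v i) (v j) (hunit i) (hunit j), hcsq i j hij]
    have hN : Complex.normSq (1-z) = 2*r := by
      rw [Complex.normSq_apply, Complex.sub_re, Complex.sub_im, Complex.one_re,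
        Complex.one_im, hzre, hzim]
      linear_combination hsq
    have hmc2 : (starRingEnd ℂ) (1-z) * (1-z) = ((2*r : ℝ) : ℂ) := by
      rw [mul_comm, Complex.mul_conj, hN]
    have hre1z : (1-z).re = r := by simp [Complex.sub_re, Complex.one_re, hzre]
    have hsum2 : (1-z) + (starRingEnd ℂ) (1-z) = ((2*r : ℝ) : ℂ) := by
      rw [Complex.add_conj, hre1z]
    have hfin : (d:ℝ) - 2*r + 2*r*((d:ℝ)+2)⁻¹ = 0 := by
      rw [hr_def]
      have h1 : ((d:ℝ)+1) ≠ 0 := by positivity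
      field_simp
      ring
    have hfc : (((d:ℝ) - 2*r + 2*r*((d:ℝ)+2)⁻¹ : ℝ) : ℂ) = 0 := by rw [hfin]; simp
    push_cast at hfc hmc2 hsum2
    linear_combination hfc - hsum2 + ((d:ℂ)+2)⁻¹ * hmc2
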